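/- The Pedersen ideal of the C*-algebra ℓ∞(G, K) of bounded functions from a set G to the compact operators K equals ℓ∞(G, F), the set of bounded functions whose values are finite-rank operators. -/

import Mathlib

open scoped ENNReal

/-- The Hilbert space `ℓ²(ℕ)`. -/
noncomputable abbrev HS : Type := lp (fun _ : ℕ => ℂ) 2

/-- `f` is an element of `ℓ∞(G, B(HS))`, i.e. a bounded operator-valued function. -/
def Bdd {G : Type*} (f : G → HS →L[ℂ] HS) : Prop := ∃ C : ℝ, ∀ t, ‖f t‖ ≤ C

/-- `f` takes values in the compact operators. -/
def Cpt {G : Type*} (f : G → HS →L[ℂ] HS) : Prop := ∀ t, IsCompactOperator (f t)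

/-- `T` is a finite-rank operator. -/
def FinRank (T : HS →L[ℂ] HS) : Prop :=
  FiniteDimensional ℂ (LinearMap.range (T : HS →ₗ[ℂ] HS))

/-- `I` is a two-sided (algebraic) ideal of `ℓ∞(G, K)` (with pointwise operations) which is
dense in `ℓ∞(G, K)` for the sup-norm. -/
def IsDenseIdeal {G : Type*} (I : Set (G → HS →L[ℂ] HS)) : Prop :=
  (∀ f ∈ I, Bdd f ∧ Cpt f) ∧
  (0 : G → HS →L[ℂ] HS) ∈ I ∧
  (∀ f ∈ I, ∀ g ∈ I, f + g ∈ I) ∧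
  (∀ c : ℂ, ∀ f ∈ I, (fun t => c • f t) ∈ I) ∧
  (∀ f ∈ I, ∀ g : G → HS →L[ℂ] HS, Bdd g → Cpt g →
    (fun t => g t * f t) ∈ I ∧ (fun t => f t * g t) ∈ I) ∧
  (∀ f : G → HS →L[ℂ] HS, Bdd f → Cpt f → ∀ ε : ℝ, 0 < ε →
    ∃ g ∈ I, ∀ t, ‖f t - g t‖ ≤ ε)

noncomputable section
namespace S17
open Submodule ContinuousLinearMap

/-- finite-rank criterion -/
lemma finRank_of_le {T : HS →L[ℂ] HS} {V : Submodule ℂ HS} [FiniteDimensional ℂ V]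
    (h : ∀ x, T x ∈ V) : FinRank T := by
  have hle : LinearMap.range (T : HS →ₗ[ℂ] HS) ≤ V := by
    rintro y ⟨x, rfl⟩; exact h x
  exact Submodule.finiteDimensional_of_le hle

/-- finite rank implies compact -/
lemma finRank_isCompact {T : HS →L[ℂ] HS} (h : FinRank T) : IsCompactOperator T := by
  set V := LinearMap.range (T : HS →ₗ[ℂ] HS)
  haveI : FiniteDimensional ℂ V := h
  refine ⟨Subtype.val '' Metric.closedBall (0 : V) ‖T‖, ?_, ?_⟩
  · exact (ProperSpace.isCompact_closedBall _ _).image continuous_subtype_val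
  · have : Metric.ball (0 : HS) 1 ⊆ T ⁻¹' (Subtype.val '' Metric.closedBall (0 : V) ‖T‖) := by
      intro x hx
      refine ⟨⟨T x, LinearMap.mem_range_self _ x⟩, ?_, rfl⟩
      simp only [Metric.mem_closedBall, dist_zero_right]
      calc ‖(⟨T x, _⟩ : V)‖ = ‖T x‖ := rfl
        _ ≤ ‖T‖ * ‖x‖ := T.le_opNorm x
        _ ≤ ‖T‖ * 1 := by
            have := Metric.mem_ball.mp hx
            rw [dist_zero_right] at this
            exact mul_le_mul_of_nonneg_left this.le (norm_nonneg T)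
        _ = ‖T‖ := mul_one _
    exact Filter.mem_of_superset (Metric.ball_mem_nhds 0 one_pos) this

/-- projection onto a finite-dimensional subspace -/
def pr (V : Submodule ℂ HS) [FiniteDimensional ℂ V] : HS →L[ℂ] HS :=
  V.subtypeL.comp (orthogonalProjection V)

lemma pr_mem (V : Submodule ℂ HS) [FiniteDimensional ℂ V] (x : HS) : pr V x ∈ V :=
  (orthogonalProjection V x).2

lemma pr_norm_le (V : Submodule ℂ HS) [FiniteDimensional ℂ V] : ‖pr V‖ ≤ 1 := by
  refine opNorm_le_bound _ zero_le_one fun x => ?_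
  rw [one_mul]
  calc ‖pr V x‖ = ‖orthogonalProjection V x‖ := rfl
    _ ≤ 1 * ‖x‖ := (orthogonalProjection V).le_of_opNorm_le (orthogonalProjection_norm_le V) x
    _ = ‖x‖ := one_mul _

lemma pr_eq_self (V : Submodule ℂ HS) [FiniteDimensional ℂ V] {x : HS} (hx : x ∈ V) :
    pr V x = x := by
  have := (starProjection_eq_self_iff (K := V)).mpr hx
  simpa [pr] using congrArg (Subtype.val) (orthogonalProjection_mem_subspace_eq_self (⟨x, hx⟩ : V))

lemma pr_finRank (V : Submodule ℂ HS) [FiniteDimensional ℂ V] : FinRank (pr V) :=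
  finRank_of_le (pr_mem V)

end S17

namespace S17
open Submodule ContinuousLinearMap

def e : ℕ → HS := fun i => lp.single 2 i (1 : ℂ)

def U : ℕ → Submodule ℂ HS := fun n => span ℂ (e '' Set.Iio n)

lemma U_mono : Monotone U := fun m n h =>
  span_mono (Set.image_mono (Set.Iio_subset_Iio h))

instance U_findim (n : ℕ) : FiniteDimensional ℂ (U n) :=
  FiniteDimensional.span_of_finite ℂ ((Set.finite_Iio n).image e)

lemma U_dense : ⊤ ≤ (⨆ n, U n).topologicalClosure := by
  rw [top_le_iff, Submodule.topologicalClosure_eq_top_iff, Submodule.eq_bot_iff]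
  intro x hx
  rw [Submodule.mem_orthogonal] at hx
  have hxi : ∀ i : ℕ, x i = 0 := by
    intro i
    have hei : e i ∈ ⨆ n, U n := by
      refine le_iSup U (i + 1) ?_
      exact subset_span ⟨i, by simp [Set.mem_Iio], rfl⟩
    have h0 := hx (e i) hei
    rwa [show (inner ℂ (e i) x : ℂ) = x i by
      simpa [e] using lp.inner_single_left (𝕜 := ℂ) i (1 : ℂ) x] at h0
  ext i
  exact hxi i

lemma tendsto_pr (x : HS) :
    Filter.Tendsto (fun n => pr (U n) x) Filter.atTop (nhds x) := by
  have := starProjection_tendsto_self U U_mono x U_dense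
  exact this

end S17

namespace S17
open Submodule ContinuousLinearMap Metric

lemma approx (T : HS →L[ℂ] HS) (hT : IsCompactOperator T) {ε : ℝ} (hε : 0 < ε) :
    ∃ S : HS →L[ℂ] HS, FinRank S ∧ ‖S‖ ≤ ‖T‖ ∧ ‖T - S‖ ≤ ε := by
  -- the compact set
  have hK : IsCompact (closure (T '' closedBall 0 1)) := by
    have := hT.isCompact_closure_image_closedBall (f := (T : HS →ₗ[ℂ] HS)) 1
    simpa using this
  set K := closure (T '' closedBall 0 1) with hKdef
  -- finite ε/3-net
  obtain ⟨t, htfin, htcov⟩ := (totallyBounded_iff.mp hK.totallyBounded) (ε/3) (by linarith)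
  -- choose convergence indices
  have hch : ∀ c : HS, ∃ N : ℕ, ∀ n ≥ N, ‖c - pr (U n) c‖ < ε/3 := by
    intro c
    have := (tendsto_pr c)
    rw [Metric.tendsto_atTop] at this
    obtain ⟨N, hN⟩ := this (ε/3) (by linarith)
    exact ⟨N, fun n hn => by
      have := hN n hn
      rwa [dist_eq_norm, norm_sub_rev] at this⟩
  choose Nf hNf using hch
  set NN := htfin.toFinset.sup Nf with hNN
  -- uniform bound on K
  have hunif : ∀ x ∈ K, ‖x - pr (U NN) x‖ ≤ ε := by
    intro x hxK
    obtain ⟨c, hct, hxc⟩ := Set.mem_iUnion₂.mp (htcov hxK)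
    have hcN : Nf c ≤ NN := Finset.le_sup (htfin.mem_toFinset.mpr hct)
    have h1 : ‖x - c‖ < ε/3 := by rw [mem_ball, dist_eq_norm] at hxc; exact hxc
    have h2 : ‖c - pr (U NN) c‖ < ε/3 := hNf c NN hcN
    have h3 : ‖pr (U NN) c - pr (U NN) x‖ ≤ ε/3 := by
      rw [← map_sub]
      calc ‖pr (U NN) (c - x)‖ ≤ 1 * ‖c - x‖ :=
            (pr (U NN)).le_of_opNorm_le (pr_norm_le _) _
        _ = ‖c - x‖ := one_mul _
        _ ≤ ε/3 := by rw [norm_sub_rev]; exact h1.le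
    calc ‖x - pr (U NN) x‖
        = ‖(x - c) + ((c - pr (U NN) c) + (pr (U NN) c - pr (U NN) x))‖ := by congr 1; abel
      _ ≤ ‖x - c‖ + (‖c - pr (U NN) c‖ + ‖pr (U NN) c - pr (U NN) x‖) :=
          (norm_add_le _ _).trans (by gcongr; exact norm_add_le _ _)
      _ ≤ ε/3 + (ε/3 + ε/3) := add_le_add h1.le (add_le_add h2.le h3)
      _ = ε := by ring
  refine ⟨(pr (U NN)).comp T, ?_, ?_, ?_⟩
  · exact finRank_of_le (fun x => pr_mem _ _)
  · calc ‖(pr (U NN)).comp T‖ ≤ ‖pr (U NN)‖ * ‖T‖ := opNorm_comp_le _ _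
      _ ≤ 1 * ‖T‖ := by gcongr; exact pr_norm_le _
      _ = ‖T‖ := one_mul _
  · refine opNorm_le_bound _ hε.le fun x => ?_
    rcases eq_or_ne x 0 with rfl | hx
    · simp
    · have hxn : (0:ℝ) < ‖x‖ := norm_pos_iff.mpr hx
      set y : HS := (‖x‖⁻¹ : ℂ) • x with hy
      have hyn : ‖y‖ = 1 := by
        rw [hy, norm_smul, norm_inv, Complex.norm_real, norm_norm, inv_mul_cancel₀ hxn.ne']
      have hyK : T y ∈ K := subset_closure ⟨y, by simp [hyn], rfl⟩
      have hkey : ‖(T - (pr (U NN)).comp T) y‖ ≤ ε := by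
        simpa [sub_eq_add_neg] using hunif (T y) hyK
      have hxy : x = (‖x‖ : ℂ) • y := by
        rw [hy, smul_smul]
        norm_cast
        rw [mul_inv_cancel₀ hxn.ne']; exact (one_smul ℂ x).symm
      calc ‖(T - (pr (U NN)).comp T) x‖
          = ‖(‖x‖ : ℂ) • (T - (pr (U NN)).comp T) y‖ := by
            rw [← map_smul, ← hxy]
        _ = ‖x‖ * ‖(T - (pr (U NN)).comp T) y‖ := by
            rw [norm_smul, Complex.norm_real, norm_norm]
        _ ≤ ‖x‖ * ε := by gcongr
        _ = ε * ‖x‖ := mul_comm _ _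

end S17

namespace S17
open Submodule ContinuousLinearMap

section General
open Submodule ContinuousLinearMap
variable {E : Type*} [NormedAddCommGroup E] [InnerProductSpace ℂ E]

def prG (V : Submodule ℂ E) [FiniteDimensional ℂ V] : E →L[ℂ] E :=
  V.subtypeL.comp (orthogonalProjection V)

lemma solveG (V : Submodule ℂ E) [FiniteDimensional ℂ V] (T g : E →L[ℂ] E)
    (hTV : ∀ x, T x ∈ V) (hg : ‖prG V - g‖ ≤ 1/3) :
    ∃ s : E →L[ℂ] E, (∀ x, s x ∈ V) ∧ ‖s‖ ≤ 2 ∧ ∀ x, s (g (T x)) = T x := by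
  haveI : CompleteSpace V := FiniteDimensional.complete ℂ V
  set P := orthogonalProjection V
  set A : V →L[ℂ] V := P.comp (g.comp V.subtypeL) with hA
  have hPle : ∀ z : E, ‖P z‖ ≤ ‖z‖ := fun z => by
    calc ‖P z‖ ≤ 1 * ‖z‖ := P.le_of_opNorm_le (orthogonalProjection_norm_le V) z
      _ = ‖z‖ := one_mul _
  have h1A : ‖(1 : V →L[ℂ] V) - A‖ ≤ 1/3 := by
    refine opNorm_le_bound _ (by norm_num) fun v => ?_
    have hv : ((1 : V →L[ℂ] V) - A) v = P ((prG V - g) ↑v) := by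
      have h1 : P ((prG V) (↑v : E)) = v := by
        have : (prG V) (↑v : E) = ↑v := by
          simp only [prG, comp_apply, coe_subtypeL', subtype_apply]
          exact congrArg Subtype.val (orthogonalProjection_mem_subspace_eq_self v)
        rw [this]
        exact orthogonalProjection_mem_subspace_eq_self v
      simp only [sub_apply, one_apply_eq_self, map_sub, h1, hA, comp_apply, coe_subtypeL', subtype_apply]
    rw [hv]
    calc ‖P ((prG V - g) ↑v)‖ ≤ ‖(prG V - g) ↑v‖ := hPle _
      _ ≤ ‖prG V - g‖ * ‖(↑v : E)‖ := le_opNorm _ _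
      _ ≤ (1/3) * ‖(↑v : E)‖ := mul_le_mul_of_nonneg_right hg (norm_nonneg _)
      _ = (1/3) * ‖v‖ := rfl
  have h1A' : ‖(1 : V →L[ℂ] V) - A‖ < 1 := lt_of_le_of_lt h1A (by norm_num)
  set u := Units.oneSub ((1 : V →L[ℂ] V) - A) h1A' with hu
  have huval : (u : V →L[ℂ] V) = A := by
    simp [hu, Units.val_oneSub, sub_sub_cancel]
  set B : V →L[ℂ] V := ↑u⁻¹ with hB
  have hBA : B * A = (1 : V →L[ℂ] V) := by
    have := u.inv_mul
    rwa [huval] at this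
  have hBnorm : ‖B‖ ≤ 2 := by
    have h1 : ‖B‖ ≤ ‖(1 : V →L[ℂ] V)‖ - 1 + (1 - ‖(1 : V →L[ℂ] V) - A‖)⁻¹ :=
      tsum_geometric_le_of_norm_lt_one _ h1A'
    have h2 : ‖(1 : V →L[ℂ] V)‖ ≤ 1 := norm_id_le
    have h3 : (1 - ‖(1 : V →L[ℂ] V) - A‖)⁻¹ ≤ (2/3 : ℝ)⁻¹ := by
      apply inv_anti₀ (by norm_num)
      linarith
    have h4 : (2/3 : ℝ)⁻¹ = 3/2 := by norm_num
    linarith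
  refine ⟨V.subtypeL.comp (B.comp P), fun x => (B (P x)).2, ?_, ?_⟩
  · calc ‖V.subtypeL.comp (B.comp P)‖ ≤ ‖V.subtypeL‖ * ‖B.comp P‖ := opNorm_comp_le _ _
      _ ≤ 1 * ‖B.comp P‖ := mul_le_mul_of_nonneg_right (norm_subtypeL_le V) (norm_nonneg (B.comp P))
      _ = ‖B.comp P‖ := one_mul _
      _ ≤ ‖B‖ * ‖P‖ := opNorm_comp_le _ _
      _ ≤ 2 * 1 := mul_le_mul hBnorm (orthogonalProjection_norm_le V) (norm_nonneg P) (by norm_num)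
      _ = 2 := by norm_num
  · intro x
    have hv : P (g (T x)) = A ⟨T x, hTV x⟩ := by
      simp [hA]
    simp only [comp_apply, coe_subtypeL', subtype_apply, hv]
    have hfin : B (A ⟨T x, hTV x⟩) = ⟨T x, hTV x⟩ := by
      have := congrArg (fun (W : V →L[ℂ] V) => W ⟨T x, hTV x⟩) hBA
      simpa [ContinuousLinearMap.mul_apply] using this
    rw [hfin]

end General
end S17

set_option maxHeartbeats 1000000 in
open S17 Submodule ContinuousLinearMap in
/-- The Pedersen ideal of `ℓ∞(G, K)` equals `ℓ∞(G, F)`, the bounded functions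
with finite-rank values: `ℓ∞(G, F)` is a dense two-sided ideal of `ℓ∞(G, K)` and it is
contained in every dense two-sided ideal. -/
theorem stmt17 (G : Type*) :
    IsDenseIdeal {f : G → HS →L[ℂ] HS | Bdd f ∧ ∀ t, FinRank (f t)} ∧
    ∀ I : Set (G → HS →L[ℂ] HS), IsDenseIdeal I →
      {f : G → HS →L[ℂ] HS | Bdd f ∧ ∀ t, FinRank (f t)} ⊆ I := by
  constructor
  · refine ⟨?_, ?_, ?_, ?_, ?_, ?_⟩
    · rintro f ⟨hb, hfr⟩
      exact ⟨hb, fun t => finRank_isCompact (hfr t)⟩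
    · refine ⟨⟨0, fun t => by rw [Pi.zero_apply, norm_zero]⟩, fun t => ?_⟩
      refine finRank_of_le (V := ⊥) fun x => ?_
      simp
    · rintro f ⟨⟨Cf, hCf⟩, hf⟩ g ⟨⟨Cg, hCg⟩, hg⟩
      refine ⟨⟨Cf + Cg, fun t => ?_⟩, fun t => ?_⟩
      · calc ‖(f + g) t‖ = ‖f t + g t‖ := rfl
          _ ≤ ‖f t‖ + ‖g t‖ := norm_add_le _ _
          _ ≤ Cf + Cg := add_le_add (hCf t) (hCg t)
      · haveI : FiniteDimensional ℂ (LinearMap.range ((f t : HS →ₗ[ℂ] HS))) := hf t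
        haveI : FiniteDimensional ℂ (LinearMap.range ((g t : HS →ₗ[ℂ] HS))) := hg t
        haveI : FiniteDimensional ℂ
            ↥(LinearMap.range ((f t : HS →ₗ[ℂ] HS)) ⊔ LinearMap.range ((g t : HS →ₗ[ℂ] HS))) :=
          Submodule.finiteDimensional_sup _ _
        refine finRank_of_le
          (V := LinearMap.range ((f t : HS →ₗ[ℂ] HS)) ⊔ LinearMap.range ((g t : HS →ₗ[ℂ] HS)))
          fun x => ?_
        have : (f + g) t x = f t x + g t x := rfl
        rw [this]
        exact Submodule.add_mem_sup (LinearMap.mem_range_self _ x) (LinearMap.mem_range_self _ x)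
    · rintro c f ⟨⟨Cf, hCf⟩, hf⟩
      refine ⟨⟨‖c‖ * Cf, fun t => ?_⟩, fun t => ?_⟩
      · calc ‖c • f t‖ = ‖c‖ * ‖f t‖ := norm_smul c (f t)
          _ ≤ ‖c‖ * Cf := mul_le_mul_of_nonneg_left (hCf t) (norm_nonneg c)
      · haveI : FiniteDimensional ℂ (LinearMap.range ((f t : HS →ₗ[ℂ] HS))) := hf t
        refine finRank_of_le (V := LinearMap.range ((f t : HS →ₗ[ℂ] HS))) fun x => ?_
        have : (c • f t) x = c • (f t x) := rfl
        rw [this]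
        exact Submodule.smul_mem _ c (LinearMap.mem_range_self _ x)
    · rintro f ⟨⟨Cf, hCf⟩, hf⟩ g ⟨Cg, hCg⟩ hgc
      have hbound : ∀ (a b : HS →L[ℂ] HS) (Ca Cb : ℝ), ‖a‖ ≤ Ca → ‖b‖ ≤ Cb →
          ‖a * b‖ ≤ (max Ca 0) * (max Cb 0) := fun a b Ca Cb ha hb => by
        calc ‖a * b‖ ≤ ‖a‖ * ‖b‖ := opNorm_comp_le a b
          _ ≤ (max Ca 0) * (max Cb 0) :=
            mul_le_mul (ha.trans (le_max_left _ _)) (hb.trans (le_max_left _ _))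
              (norm_nonneg b) (le_max_right _ _)
      constructor
      · refine ⟨⟨max Cg 0 * max Cf 0, fun t => hbound _ _ _ _ (hCg t) (hCf t)⟩, fun t => ?_⟩
        haveI : FiniteDimensional ℂ (LinearMap.range ((f t : HS →ₗ[ℂ] HS))) := hf t
        haveI : FiniteDimensional ℂ
            ↥(Submodule.map ((g t : HS →ₗ[ℂ] HS)) (LinearMap.range ((f t : HS →ₗ[ℂ] HS)))) :=
          Module.Finite.map _ _
        refine finRank_of_le
          (V := Submodule.map ((g t : HS →ₗ[ℂ] HS)) (LinearMap.range ((f t : HS →ₗ[ℂ] HS))))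
          fun x => ?_
        exact ⟨f t x, LinearMap.mem_range_self _ x, rfl⟩
      · refine ⟨⟨max Cf 0 * max Cg 0, fun t => hbound _ _ _ _ (hCf t) (hCg t)⟩, fun t => ?_⟩
        haveI : FiniteDimensional ℂ (LinearMap.range ((f t : HS →ₗ[ℂ] HS))) := hf t
        refine finRank_of_le (V := LinearMap.range ((f t : HS →ₗ[ℂ] HS))) fun x => ?_
        exact LinearMap.mem_range_self _ _
    · rintro f ⟨Cf, hCf⟩ hfc ε hε
      have hch : ∀ t, ∃ S : HS →L[ℂ] HS, FinRank S ∧ ‖S‖ ≤ ‖f t‖ ∧ ‖f t - S‖ ≤ ε :=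
        fun t => approx (f t) (hfc t) hε
      choose S hS1 hS2 hS3 using hch
      exact ⟨S, ⟨⟨Cf, fun t => (hS2 t).trans (hCf t)⟩, hS1⟩, hS3⟩
  · rintro I ⟨hIbc, -, -, -, hImul, hIdense⟩ f ⟨⟨Cf, hCf⟩, hfr⟩
    -- the projection family
    set p : G → HS →L[ℂ] HS := fun t =>
      letI : FiniteDimensional ℂ (LinearMap.range ((f t : HS →ₗ[ℂ] HS))) := hfr t
      pr (LinearMap.range ((f t : HS →ₗ[ℂ] HS))) with hp
    have hpb : Bdd p := ⟨1, fun t => by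
      letI : FiniteDimensional ℂ (LinearMap.range ((f t : HS →ₗ[ℂ] HS))) := hfr t
      exact pr_norm_le _⟩
    have hpc : Cpt p := fun t => by
      letI : FiniteDimensional ℂ (LinearMap.range ((f t : HS →ₗ[ℂ] HS))) := hfr t
      exact finRank_isCompact (pr_finRank _)
    obtain ⟨g, hgI, hgp⟩ := hIdense p hpb hpc (1/3) (by norm_num)
    -- solve for s
    have hsol : ∀ t, ∃ s : HS →L[ℂ] HS,
        (∀ x, s x ∈ LinearMap.range ((f t : HS →ₗ[ℂ] HS))) ∧ ‖s‖ ≤ 2 ∧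
        ∀ x, s (g t (f t x)) = f t x := by
      intro t
      letI : FiniteDimensional ℂ (LinearMap.range ((f t : HS →ₗ[ℂ] HS))) := hfr t
      exact solveG _ (f t) (g t) (fun x => LinearMap.mem_range_self _ x) (hgp t)
    choose s hs1 hs2 hs3 using hsol
    have hsb : Bdd s := ⟨2, hs2⟩
    have hsc : Cpt s := fun t => by
      letI : FiniteDimensional ℂ (LinearMap.range ((f t : HS →ₗ[ℂ] HS))) := hfr t
      exact finRank_isCompact (finRank_of_le (hs1 t))
    have hbf : Bdd f := ⟨Cf, hCf⟩
    have hcf : Cpt f := fun t => finRank_isCompact (hfr t)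
    have hm : (fun t => g t * f t) ∈ I := (hImul g hgI f hbf hcf).2
    have hfinal : (fun t => s t * (g t * f t)) ∈ I :=
      (hImul _ hm s hsb hsc).1
    have heq : (fun t => s t * (g t * f t)) = f := by
      funext t
      refine ContinuousLinearMap.ext fun x => ?_
      simp only [ContinuousLinearMap.mul_apply]
      exact hs3 t x
    rwa [heq] at hfinal
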